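/- Jung's enclosing theorem: For every integer d ≥ 1 and every nonempty bounded subset P of EuclideanSpace ℝ (Fin d), there exists a point c ∈ EuclideanSpace ℝ (Fin d) such that P is contained in the closed ball centered at c of radius sqrt(d / (2*(d+1))) * diam P; consequently the circumradius of P is at most sqrt(d / (2*(d+1))) times its diameter. -/

import Mathlib

open Metric Set Module
open scoped RealInnerProductSpace

private lemma jung_ineq (d : ℕ) (R D : ℝ) (hD : 0 ≤ D) (c : EuclideanSpace ℝ (Fin d))
    (T : Set (EuclideanSpace ℝ (Fin d)))
    (hT : ∀ x ∈ T, dist c x = R)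
    (hdiam : ∀ x ∈ T, ∀ y ∈ T, dist x y ≤ D)
    (hc : c ∈ closure (convexHull ℝ T)) :
    2 * R ^ 2 ≤ ((d : ℝ) / (d + 1)) * D ^ 2 := by
  classical
  have hTne : T.Nonempty := by
    by_contra h
    rw [Set.not_nonempty_iff_eq_empty] at h
    simp [h] at hc
  have hR : 0 ≤ R := (hT _ hTne.choose_spec) ▸ dist_nonneg
  have key : ∀ ε : ℝ, 0 < ε → 2 * R ^ 2 ≤ ((d : ℝ) / (d + 1)) * D ^ 2 + 2 * ε * R := by
    intro ε hε
    obtain ⟨y, hy, hyc⟩ : ∃ y ∈ convexHull ℝ T, dist c y < ε :=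
      Metric.mem_closure_iff.mp hc ε hε
    rw [convexHull_eq_union] at hy
    simp only [Set.mem_iUnion] at hy
    obtain ⟨t, hts, hai, hyt⟩ := hy
    have hcard : (t.card : ℝ) ≤ (d : ℝ) + 1 := by
      have h1 : Fintype.card t ≤ finrank ℝ (vectorSpan ℝ (Set.range ((↑) : t → EuclideanSpace ℝ (Fin d)))) + 1 :=
        hai.card_le_finrank_succ
      have h2 : finrank ℝ (vectorSpan ℝ (Set.range ((↑) : t → EuclideanSpace ℝ (Fin d)))) ≤ d := by
        simpa [finrank_euclideanSpace_fin] using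
          (Submodule.finrank_le (vectorSpan ℝ (Set.range ((↑) : t → EuclideanSpace ℝ (Fin d)))))
      have h3 := h1.trans (Nat.add_le_add_right h2 1)
      rw [Fintype.card_coe] at h3
      exact_mod_cast h3
    rw [Finset.convexHull_eq] at hyt
    obtain ⟨w, hw0, hw1, hwy⟩ := hyt
    rw [Finset.centerMass_eq_of_sum_1 _ _ hw1] at hwy
    simp only [id] at hwy
    have htne : t.Nonempty := by
      rcases t.eq_empty_or_nonempty with rfl | h
      · simp at hw1
      · exact h
    have hsum : ∑ x ∈ t, w x • (x - c) = y - c := by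
      simp only [smul_sub]
      rw [Finset.sum_sub_distrib, ← Finset.sum_smul, hw1, hwy, one_smul]
    have hj : ∀ j ∈ t, 2 * R ^ 2 - 2 * ε * R ≤ (1 - w j) * D ^ 2 := by
      intro j hj
      have hjT : j ∈ T := hts hj
      have hjR : ‖j - c‖ = R := by rw [← dist_eq_norm, dist_comm]; exact hT j hjT
      have hnorm : ∀ x ∈ t, ‖x - j‖ ^ 2 = 2 * R ^ 2 - 2 * ⟪x - c, j - c⟫ := by
        intro x hx
        have hx' : ‖x - c‖ = R := by rw [← dist_eq_norm, dist_comm]; exact hT x (hts hx)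
        have hxy : x - j = (x - c) - (j - c) := by abel
        rw [hxy, norm_sub_sq_real, hx', hjR]
        ring
      have e1 : ∑ x ∈ t, w x * ‖x - j‖ ^ 2 = 2 * R ^ 2 - 2 * ⟪y - c, j - c⟫ := by
        calc ∑ x ∈ t, w x * ‖x - j‖ ^ 2
            = ∑ x ∈ t, (w x * (2 * R ^ 2) - 2 * ⟪w x • (x - c), j - c⟫) := by
              refine Finset.sum_congr rfl fun x hx => ?_
              rw [hnorm x hx, real_inner_smul_left]; ring
          _ = 2 * R ^ 2 - 2 * ⟪y - c, j - c⟫ := by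
              rw [Finset.sum_sub_distrib, ← Finset.sum_mul, hw1, ← Finset.mul_sum,
                ← sum_inner, hsum]
              ring
      have e2 : 2 * R ^ 2 - 2 * ε * R ≤ ∑ x ∈ t, w x * ‖x - j‖ ^ 2 := by
        rw [e1]
        have hle : ⟪y - c, j - c⟫ ≤ ε * R := by
          calc ⟪y - c, j - c⟫ ≤ ‖y - c‖ * ‖j - c‖ := real_inner_le_norm _ _
            _ ≤ ε * R := by
                rw [hjR]
                apply mul_le_mul_of_nonneg_right _ hR
                rw [← dist_eq_norm, dist_comm]; exact hyc.le
        linarith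
      have e3 : ∑ x ∈ t, w x * ‖x - j‖ ^ 2 ≤ (1 - w j) * D ^ 2 := by
        rw [← Finset.add_sum_erase _ _ hj]
        simp only [sub_self, norm_zero]
        have hb : ∑ x ∈ t.erase j, w x * ‖x - j‖ ^ 2 ≤ ∑ x ∈ t.erase j, w x * D ^ 2 := by
          refine Finset.sum_le_sum fun x hx => ?_
          refine mul_le_mul_of_nonneg_left ?_ (hw0 x (Finset.mem_of_mem_erase hx))
          have hd : dist x j ≤ D := hdiam x (hts (Finset.mem_of_mem_erase hx)) j hjT
          rw [← dist_eq_norm]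
          exact pow_le_pow_left₀ dist_nonneg hd 2
        have hwsum : ∑ x ∈ t.erase j, w x = 1 - w j := by
          rw [Finset.sum_erase_eq_sub hj, hw1]
        rw [← Finset.sum_mul, hwsum] at hb
        calc w j * (0:ℝ)^2 + ∑ x ∈ t.erase j, w x * ‖x - j‖ ^ 2
            = ∑ x ∈ t.erase j, w x * ‖x - j‖ ^ 2 := by ring_nf
          _ ≤ (1 - w j) * D ^ 2 := hb
      linarith
    have hsq : (1 : ℝ) / ((d : ℝ) + 1) ≤ ∑ j ∈ t, (w j) ^ 2 := by
      have h1 : (1 : ℝ) ≤ (t.card : ℝ) * ∑ j ∈ t, (w j) ^ 2 := by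
        have h := sq_sum_le_card_mul_sum_sq (s := t) (f := w)
        rw [hw1] at h
        simpa using h
      have hsq0 : 0 ≤ ∑ j ∈ t, (w j) ^ 2 := Finset.sum_nonneg fun j _ => sq_nonneg _
      rw [div_le_iff₀ (by positivity)]
      calc (1 : ℝ) ≤ (t.card : ℝ) * ∑ j ∈ t, (w j) ^ 2 := h1
        _ ≤ ((d : ℝ) + 1) * ∑ j ∈ t, (w j) ^ 2 := mul_le_mul_of_nonneg_right hcard hsq0
        _ = (∑ j ∈ t, (w j) ^ 2) * ((d : ℝ) + 1) := by ring
    have main : 2 * R ^ 2 - 2 * ε * R ≤ (1 - ∑ j ∈ t, (w j) ^ 2) * D ^ 2 := by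
      have hw2 : ∑ j ∈ t, w j * (1 - w j) = 1 - ∑ j ∈ t, (w j) ^ 2 := by
        simp only [mul_sub, mul_one, ← sq]
        rw [Finset.sum_sub_distrib, hw1]
      calc 2 * R ^ 2 - 2 * ε * R
          = ∑ j ∈ t, w j * (2 * R ^ 2 - 2 * ε * R) := by rw [← Finset.sum_mul, hw1, one_mul]
        _ ≤ ∑ j ∈ t, w j * ((1 - w j) * D ^ 2) := by
            refine Finset.sum_le_sum fun j hjt => mul_le_mul_of_nonneg_left (hj j hjt) (hw0 j hjt)
        _ = (1 - ∑ j ∈ t, (w j) ^ 2) * D ^ 2 := by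
            simp only [← mul_assoc]
            rw [← Finset.sum_mul, hw2]
    have hfin : (1 - ∑ j ∈ t, (w j) ^ 2) * D ^ 2 ≤ ((d : ℝ) / (d + 1)) * D ^ 2 := by
      apply mul_le_mul_of_nonneg_right _ (by positivity)
      have hdd : (d : ℝ) / (d + 1) = 1 - 1 / ((d : ℝ) + 1) := by
        field_simp
        ring
      rw [hdd]
      linarith
    linarith
  by_contra h
  push_neg at h
  rcases eq_or_lt_of_le hR with hR0 | hR0
  · have h1 := key 1 one_pos
    rw [← hR0] at h h1
    nlinarith
  · set A := ((d : ℝ) / (d + 1)) * D ^ 2 with hA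
    have hε : 0 < (2 * R ^ 2 - A) / (4 * R) := div_pos (by linarith) (by linarith)
    have h2 := key _ hε
    have : 2 * ((2 * R ^ 2 - A) / (4 * R)) * R = (2 * R ^ 2 - A) / 2 := by
      field_simp
      ring
    rw [this] at h2
    linarith

private lemma jung_center (d : ℕ) (K : Set (EuclideanSpace ℝ (Fin d)))
    (hK : IsCompact K) (hne : K.Nonempty) :
    ∃ (c : EuclideanSpace ℝ (Fin d)) (R : ℝ), 0 ≤ R ∧ (∀ x ∈ K, dist c x ≤ R) ∧
      c ∈ closure (convexHull ℝ {x | x ∈ K ∧ dist c x = R}) := by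
  set g : EuclideanSpace ℝ (Fin d) → ℝ := fun c => sSup ((dist c) '' K) with hg
  have hbddA : ∀ (c : EuclideanSpace ℝ (Fin d)) (K' : Set (EuclideanSpace ℝ (Fin d))),
      IsCompact K' → BddAbove ((dist c) '' K') := fun c K' h =>
    (h.image (continuous_const.dist continuous_id)).bddAbove
  have hle : ∀ c, ∀ x ∈ K, dist c x ≤ g c := fun c x hx =>
    le_csSup (hbddA c K hK) (mem_image_of_mem _ hx)
  have hmax : ∀ c, ∃ x ∈ K, g c = dist c x := by
    intro c
    obtain ⟨x, hxK, hmaxx⟩ := hK.exists_isMaxOn hne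
      ((continuous_const.dist continuous_id).continuousOn)
    refine ⟨x, hxK, le_antisymm (csSup_le (hne.image _) ?_) (le_csSup (hbddA c K hK)
      (mem_image_of_mem _ hxK))⟩
    rintro _ ⟨z, hz, rfl⟩
    exact hmaxx hz
  have hlipsub : ∀ a b, g a ≤ g b + dist a b := by
    intro a b
    refine csSup_le (hne.image _) ?_
    rintro _ ⟨x, hx, rfl⟩
    calc dist a x ≤ dist a b + dist b x := dist_triangle a b x
      _ ≤ dist a b + g b := by linarith [hle b x hx]
      _ = g b + dist a b := by ring
  have hcont : Continuous g := by
    refine (LipschitzWith.of_dist_le_mul (K := 1) fun a b => ?_).continuous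
    rw [Real.dist_eq, NNReal.coe_one, one_mul, abs_sub_le_iff]
    constructor
    · linarith [hlipsub a b]
    · linarith [hlipsub b a, dist_comm a b]
  obtain ⟨x₀, hx0⟩ := hne
  have hgx0 : 0 ≤ g x₀ := by
    have := hle x₀ x₀ hx0
    simpa using this
  obtain ⟨c, hcB, hmin⟩ := (isCompact_closedBall x₀ (g x₀)).exists_isMinOn
    ⟨x₀, mem_closedBall_self hgx0⟩ hcont.continuousOn
  have hglobal : ∀ z, g c ≤ g z := by
    intro z
    by_cases hz : z ∈ closedBall x₀ (g x₀)
    · exact hmin hz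
    · have h1 : g x₀ < dist z x₀ := by
        rw [mem_closedBall] at hz; linarith [not_le.mp hz]
      have h2 : dist z x₀ ≤ g z := hle z x₀ hx0
      have h3 : g c ≤ g x₀ := hmin (mem_closedBall_self hgx0)
      linarith
  set R := g c with hRdef
  obtain ⟨xm, hxmK, hxm⟩ := hmax c
  have hR : 0 ≤ R := by rw [hRdef, hxm]; exact dist_nonneg
  set T : Set (EuclideanSpace ℝ (Fin d)) := {x | x ∈ K ∧ dist c x = R} with hTdef
  have hTne : T.Nonempty := ⟨xm, hxmK, hxm.symm⟩
  refine ⟨c, R, hR, hle c, ?_⟩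
  by_contra hcT
  obtain ⟨f, u, hfu, hub⟩ := geometric_hahn_banach_point_closed
    ((convex_convexHull ℝ T).closure) isClosed_closure hcT
  set v := (InnerProductSpace.toDual ℝ (EuclideanSpace ℝ (Fin d))).symm f with hvdef
  have hv : ∀ x, ⟪v, x⟫ = f x := fun x => InnerProductSpace.toDual_symm_apply
  set δ := u - f c with hδdef
  have hδ : 0 < δ := by simp [hδdef]; linarith
  have hTv : ∀ x ∈ T, δ < ⟪v, x - c⟫ := by
    intro x hx
    have : u < f x := hub x (subset_closure (subset_convexHull ℝ T hx))
    rw [inner_sub_right, hv, hv]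
    simp only [hδdef]
    linarith
  have hRpos : 0 < R := by
    obtain ⟨x, hx⟩ := hTne
    have h1 := hTv x hx
    have hxc : x ≠ c := by
      intro h
      rw [h] at h1
      simp at h1
      linarith
    have : 0 < dist c x := dist_pos.mpr (Ne.symm hxc)
    rw [hx.2] at this
    exact this
  have hvne : v ≠ 0 := by
    obtain ⟨x, hx⟩ := hTne
    intro h
    have h1 := hTv x hx
    rw [h] at h1
    simp at h1
    linarith
  have hnv : 0 < ‖v‖ := norm_pos_iff.mpr hvne
  set U : Set (EuclideanSpace ℝ (Fin d)) := {x | δ/2 < ⟪v, x - c⟫} with hUdef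
  have hUopen : IsOpen U := by
    have : Continuous fun x : EuclideanSpace ℝ (Fin d) => ⟪v, x - c⟫ :=
      continuous_const.inner (continuous_id.sub continuous_const)
    exact isOpen_lt continuous_const this
  have hK' : IsCompact (K \ U) := hK.diff hUopen
  set R' := sSup ((dist c) '' (K \ U)) with hR'def
  have hR'lt : R' < R := by
    rcases (K \ U).eq_empty_or_nonempty with he | hne'
    · rw [hR'def, he]
      simpa using hRpos
    · obtain ⟨z, hzK', hmaxz⟩ := hK'.exists_isMaxOn hne'
        ((continuous_const.dist continuous_id).continuousOn)
      have hR'z : R' ≤ dist c z := csSup_le (hne'.image _) (by rintro _ ⟨p, hp, rfl⟩; exact hmaxz hp)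
      have hzR : dist c z ≤ R := hle c z hzK'.1
      rcases eq_or_lt_of_le hzR with h | h
      · exact absurd (lt_trans (half_lt_self hδ) (hTv z ⟨hzK'.1, h⟩)) (by simpa [hUdef] using hzK'.2)
      · linarith
  set t0 := min (δ/(2*‖v‖^2)) ((R - R')/(2*‖v‖)) with ht0def
  have ht0 : 0 < t0 := lt_min (by positivity) (by apply div_pos (by linarith) (by positivity))
  set c' := c + t0 • v with hc'def
  have hclaim : ∀ x ∈ K, dist c' x < R := by
    intro x hx
    by_cases hxU : x ∈ U
    · have hdc : dist c x ≤ R := hle c x hx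
      have hinner : δ/2 < ⟪v, x - c⟫ := hxU
      have hsq : dist c' x ^ 2 = ‖c - x‖^2 - 2 * t0 * ⟪v, x - c⟫ + t0^2 * ‖v‖^2 := by
        have h1 : c' - x = (c - x) + t0 • v := by rw [hc'def]; abel
        rw [dist_eq_norm, h1, norm_add_sq_real, real_inner_smul_right, norm_smul]
        have h2 : ⟪c - x, v⟫ = - ⟪v, x - c⟫ := by
          rw [real_inner_comm, ← inner_neg_right]
          congr 1
          abel
        rw [h2]
        simp [abs_of_pos ht0]
        ring
      have hb1 : t0 * ‖v‖^2 ≤ δ/2 := by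
        have h := min_le_left (δ/(2*‖v‖^2)) ((R - R')/(2*‖v‖))
        rw [← ht0def] at h
        calc t0 * ‖v‖^2 ≤ (δ/(2*‖v‖^2)) * ‖v‖^2 :=
              mul_le_mul_of_nonneg_right h (sq_nonneg _)
          _ = δ/2 := by field_simp
      have hlt : dist c' x ^ 2 < R ^ 2 := by
        have hcx : ‖c - x‖^2 ≤ R^2 := by
          rw [← dist_eq_norm]
          exact pow_le_pow_left₀ dist_nonneg hdc 2
        have h3 : t0^2 * ‖v‖^2 = t0 * (t0 * ‖v‖^2) := by ring
        nlinarith [mul_pos ht0 hδ, ht0]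
      exact lt_of_pow_lt_pow_left₀ 2 hRpos.le hlt
    · have hxK' : x ∈ K \ U := ⟨hx, hxU⟩
      have h1 : dist c x ≤ R' := le_csSup (hbddA c _ hK') (mem_image_of_mem _ hxK')
      have h2 : dist c' c = t0 * ‖v‖ := by
        rw [hc'def, dist_eq_norm]
        simp [norm_smul, abs_of_pos ht0]
      have h3 : t0 * ‖v‖ ≤ (R - R')/2 := by
        have h := min_le_right (δ/(2*‖v‖^2)) ((R - R')/(2*‖v‖))
        rw [← ht0def] at h
        calc t0 * ‖v‖ ≤ ((R - R')/(2*‖v‖)) * ‖v‖ :=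
              mul_le_mul_of_nonneg_right h (norm_nonneg _)
          _ = (R - R')/2 := by field_simp
      calc dist c' x ≤ dist c' c + dist c x := dist_triangle c' c x
        _ ≤ t0 * ‖v‖ + R' := by rw [h2]; linarith
        _ ≤ (R - R')/2 + R' := by linarith
        _ < R := by linarith
  obtain ⟨xs, hxsK, hxs⟩ := hmax c'
  have : g c' < R := hxs ▸ hclaim xs hxsK
  linarith [hglobal c']


/-- **Jung's enclosing theorem.** Every nonempty bounded subset `P` of
`EuclideanSpace ℝ (Fin d)` is contained in a closed ball of radius
`sqrt (d / (2*(d+1))) * diam P`. -/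
theorem jung_enclosing (d : ℕ) (hd : 1 ≤ d)
    (P : Set (EuclideanSpace ℝ (Fin d))) (hne : P.Nonempty)
    (hbdd : Bornology.IsBounded P) :
    ∃ c : EuclideanSpace ℝ (Fin d),
      P ⊆ Metric.closedBall c
        (Real.sqrt ((d : ℝ) / (2 * ((d : ℝ) + 1))) * Metric.diam P) := by
  set K := closure P with hKdef
  have hKcomp : IsCompact K := hbdd.isCompact_closure
  have hKne : K.Nonempty := hne.closure
  obtain ⟨c, R, hR, hle, hc⟩ := jung_center d K hKcomp hKne
  have hdiamK : Metric.diam K = Metric.diam P := by rw [hKdef, Metric.diam_closure]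
  have hD : 0 ≤ Metric.diam P := Metric.diam_nonneg
  have hineq : 2 * R ^ 2 ≤ ((d : ℝ) / (d + 1)) * (Metric.diam P) ^ 2 := by
    refine jung_ineq d R (Metric.diam P) hD c {x | x ∈ K ∧ dist c x = R} ?_ ?_ hc
    · exact fun x hx => hx.2
    · intro x hx y hy
      rw [← hdiamK]
      exact Metric.dist_le_diam_of_mem hbdd.closure hx.1 hy.1
  have hRle : R ≤ Real.sqrt ((d : ℝ) / (2 * ((d : ℝ) + 1))) * Metric.diam P := by
    have h1 : R ^ 2 ≤ ((d : ℝ) / (2 * ((d : ℝ) + 1))) * (Metric.diam P) ^ 2 := by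
      have hd1 : (0:ℝ) < (d:ℝ) + 1 := by positivity
      have : (d : ℝ) / (2 * ((d : ℝ) + 1)) = ((d : ℝ) / (d + 1)) / 2 := by
        rw [div_div, mul_comm]
      rw [this]
      linarith
    calc R = Real.sqrt (R ^ 2) := (Real.sqrt_sq hR).symm
      _ ≤ Real.sqrt (((d : ℝ) / (2 * ((d : ℝ) + 1))) * (Metric.diam P) ^ 2) :=
          Real.sqrt_le_sqrt h1
      _ = Real.sqrt ((d : ℝ) / (2 * ((d : ℝ) + 1))) * Metric.diam P := by
          rw [Real.sqrt_mul (by positivity), Real.sqrt_sq hD]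
  refine ⟨c, fun x hx => ?_⟩
  rw [Metric.mem_closedBall, dist_comm]
  exact (hle x (subset_closure hx)).trans hRle
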